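/- Let A ∈ ℝ^{m×n} have all rows nonzero, b ∈ ℝ^m, and x⋆ ∈ ℝⁿ with A x⋆ = b. Let λ > 0 satisfy ‖Au‖₂² ≥ λ‖u‖₂² for every u in the column space R(Aᵀ) of Aᵀ. Let x₀ ∈ ℝⁿ with x₀ − x⋆ ∈ R(Aᵀ) and x₀ ≠ x⋆, let r₀ = b − Ax₀, and define the index set I₀ = { i : |r₀^{(i)}|² ≥ (1/2)( max_{1≤l≤m} |r₀^{(l)}|² + Σ_{l=1}^m (‖A^{(l)}‖₂²/‖A‖_F²)|r₀^{(l)}|² ) }. Let A_{I₀} and b_{I₀} be the row submatrix of A and subvector of b indexed by I₀, and let μ > 0 satisfy ‖A_{I₀}y‖₂² ≤ μ‖y‖₂² for all y ∈ ℝⁿ. Let x₁ ∈ ℝⁿ satisfy A_{I₀}x₁ = b_{I₀} and x₁ − x₀ ∈ R(A_{I₀}ᵀ). Then ‖x₁ − x⋆‖₂² ≤ ( 1 − |I₀| · (min_{1≤i≤m}‖A^{(i)}‖₂²/μ) · (λ/‖A‖_F²) ) ‖x₀ − x⋆‖₂². -/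

import Mathlib

open Matrix

/-- squared Euclidean norm of the `i`-th row of `A` -/
noncomputable def rowSq {m n : ℕ} (A : Matrix (Fin m) (Fin n) ℝ) (i : Fin m) : ℝ :=
  ∑ j, (A i j) ^ 2

/-- squared Frobenius norm of `A` -/
noncomputable def frobSq {m n : ℕ} (A : Matrix (Fin m) (Fin n) ℝ) : ℝ :=
  ∑ i, rowSq A i

/-- `i`-th entry of the residual `b - Ax` -/
noncomputable def res {m n : ℕ} (A : Matrix (Fin m) (Fin n) ℝ) (b : Fin m → ℝ)
    (x : Fin n → ℝ) (i : Fin m) : ℝ :=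
  b i - A.mulVec x i

/-- the first-step bound (1a) of Theorem 2 for the GMBK method. The block
Kaczmarz update `x₁ = x₀ + A_{I₀}†(b_{I₀} − A_{I₀}x₀)` is characterized by
`A_{I₀}x₁ = b_{I₀}` and `x₁ − x₀ ∈ R(A_{I₀}ᵀ)`. -/
theorem gmbk_first_step_bound (m n : ℕ)
    (A : Matrix (Fin m) (Fin n) ℝ)
    (hA : ∀ i, (fun j => A i j) ≠ 0)
    (b : Fin m → ℝ) (xs : Fin n → ℝ) (hxs : A.mulVec xs = b)
    (lam : ℝ) (hlam : 0 < lam)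
    (hspecA : ∀ u : Fin n → ℝ, (∃ y : Fin m → ℝ, u = Aᵀ.mulVec y) →
      ∑ i, (A.mulVec u i) ^ 2 ≥ lam * ∑ j, (u j) ^ 2)
    (x0 : Fin n → ℝ) (hx0mem : ∃ y : Fin m → ℝ, x0 - xs = Aᵀ.mulVec y)
    (hx0ne : x0 ≠ xs)
    (MxR : ℝ) (hMxR : IsGreatest (Set.range fun i => (res A b x0 i) ^ 2) MxR)
    (I0 : Finset (Fin m))
    (hI0 : ∀ i, i ∈ I0 ↔ (res A b x0 i) ^ 2 ≥
      (1 / 2) * (MxR + ∑ l, (rowSq A l / frobSq A) * (res A b x0 l) ^ 2))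
    (μ : ℝ) (hμ : 0 < μ)
    (hspecI : ∀ y : Fin n → ℝ, ∑ i ∈ I0, (A.mulVec y i) ^ 2 ≤ μ * ∑ j, (y j) ^ 2)
    (mA : ℝ) (hmA : IsLeast (Set.range fun i => rowSq A i) mA)
    (x1 : Fin n → ℝ)
    (hx1sol : ∀ i ∈ I0, A.mulVec x1 i = b i)
    (hx1mem : ∃ z : Fin m → ℝ, ∀ j, x1 j - x0 j = ∑ i ∈ I0, z i * A i j) :
    ∑ j, (x1 j - xs j) ^ 2
      ≤ (1 - (I0.card : ℝ) * (mA / μ) * (lam / frobSq A)) * ∑ j, (x0 j - xs j) ^ 2 := by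
  classical
  obtain ⟨i0, hi0⟩ := hmA.1
  -- positivity facts
  have hrowpos : ∀ i, 0 < rowSq A i := by
    intro i
    have h := hA i
    have hex : ∃ j, A i j ≠ 0 := by
      by_contra hc; push_neg at hc; exact h (funext hc)
    obtain ⟨j, hj⟩ := hex
    exact Finset.sum_pos' (fun k _ => sq_nonneg _)
      ⟨j, Finset.mem_univ j, by positivity⟩
  have hF : 0 < frobSq A := Finset.sum_pos (fun i _ => hrowpos i) ⟨i0, Finset.mem_univ i0⟩
  have hmApos : 0 < mA := hi0 ▸ hrowpos i0
  have hxsi : ∀ i, A.mulVec xs i = b i := fun i => congrFun hxs i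
  -- residual = - A (x0 - xs)
  have hres : ∀ i, res A b x0 i = - A.mulVec (x0 - xs) i := by
    intro i
    simp only [res, Matrix.mulVec, dotProduct, Pi.sub_apply, mul_sub, ← hxsi i,
      Finset.sum_sub_distrib]
    ring
  have hressq : ∀ i, (res A b x0 i) ^ 2 = (A.mulVec (x0 - xs) i) ^ 2 := by
    intro i; rw [hres]; ring
  -- abbreviations
  set E0 := ∑ j, (x0 j - xs j) ^ 2 with hE0
  set D := ∑ j, (x1 j - x0 j) ^ 2 with hD
  set W := ∑ l, (rowSq A l / frobSq A) * (res A b x0 l) ^ 2 with hW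
  -- orthogonality
  have horth : ∑ j, (x1 j - x0 j) * (x1 j - xs j) = 0 := by
    obtain ⟨z, hz⟩ := hx1mem
    calc ∑ j, (x1 j - x0 j) * (x1 j - xs j)
        = ∑ j, ∑ i ∈ I0, z i * A i j * (x1 j - xs j) := by
          refine Finset.sum_congr rfl fun j _ => ?_
          rw [hz j, Finset.sum_mul]
      _ = ∑ i ∈ I0, z i * (∑ j, A i j * (x1 j - xs j)) := by
          rw [Finset.sum_comm]
          exact Finset.sum_congr rfl fun i _ => by
            rw [Finset.mul_sum]
            exact Finset.sum_congr rfl fun j _ => by ring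
      _ = 0 := by
          refine Finset.sum_eq_zero fun i hi => ?_
          have h1 : ∑ j, A i j * (x1 j - xs j) = A.mulVec x1 i - A.mulVec xs i := by
            simp only [Matrix.mulVec, dotProduct, mul_sub, Finset.sum_sub_distrib]
          rw [h1, hx1sol i hi, hxsi i]
          simp
  -- Pythagoras
  have hpyth : E0 = (∑ j, (x1 j - xs j) ^ 2) + D := by
    have h1 : ∀ j, (x0 j - xs j) ^ 2 =
        (x1 j - xs j) ^ 2 + (x1 j - x0 j) ^ 2
          - 2 * ((x1 j - x0 j) * (x1 j - xs j)) := fun j => by ring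
    rw [hE0]
    simp only [h1]
    rw [Finset.sum_sub_distrib, Finset.sum_add_distrib, ← Finset.mul_sum, horth]
    ring
  -- residual on I0 equals A(x1 - x0)
  have hresI : ∀ i ∈ I0, res A b x0 i = A.mulVec (fun j => x1 j - x0 j) i := by
    intro i hi
    have h1 : A.mulVec (fun j => x1 j - x0 j) i = A.mulVec x1 i - A.mulVec x0 i := by
      simp only [Matrix.mulVec, dotProduct, mul_sub, Finset.sum_sub_distrib]
    rw [res, h1, hx1sol i hi]
  -- S ≤ μ D
  have hSD : ∑ i ∈ I0, (res A b x0 i) ^ 2 ≤ μ * D := by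
    calc ∑ i ∈ I0, (res A b x0 i) ^ 2
        = ∑ i ∈ I0, (A.mulVec (fun j => x1 j - x0 j) i) ^ 2 :=
          Finset.sum_congr rfl fun i hi => by rw [hresI i hi]
      _ ≤ μ * ∑ j, (x1 j - x0 j) ^ 2 := hspecI _
  -- W ≤ MxR
  have hsumrow : ∑ l, rowSq A l / frobSq A = 1 := by
    rw [← Finset.sum_div, ← frobSq]
    exact div_self (ne_of_gt hF)
  have hWle : W ≤ MxR := by
    have h1 : W ≤ ∑ l, (rowSq A l / frobSq A) * MxR := by
      refine Finset.sum_le_sum fun l _ => ?_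
      exact mul_le_mul_of_nonneg_left (hMxR.2 ⟨l, rfl⟩) (div_nonneg (hrowpos l).le hF.le)
    have h2 : ∑ l, (rowSq A l / frobSq A) * MxR = MxR := by
      rw [← Finset.sum_mul, hsumrow, one_mul]
    linarith
  -- spectral lower bound on full residual
  have hsum_r : ∑ l, (res A b x0 l) ^ 2 ≥ lam * E0 := by
    have h1 := hspecA (x0 - xs) hx0mem
    have h2 : ∑ l, (res A b x0 l) ^ 2 = ∑ l, (A.mulVec (x0 - xs) l) ^ 2 :=
      Finset.sum_congr rfl fun l _ => hressq l
    have h3 : ∑ j, ((x0 - xs) j) ^ 2 = E0 := by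
      simp [hE0]
    rw [h2]
    rw [h3] at h1
    exact h1
  -- W lower bound
  have hWge : W ≥ mA * lam / frobSq A * E0 := by
    have h1 : W ≥ ∑ l, (mA / frobSq A) * (res A b x0 l) ^ 2 := by
      refine Finset.sum_le_sum fun l _ => ?_
      exact mul_le_mul_of_nonneg_right
        (div_le_div_of_nonneg_right (hmA.2 ⟨l, rfl⟩) hF.le) (sq_nonneg _)
    have h2 : ∑ l, (mA / frobSq A) * (res A b x0 l) ^ 2
        = (mA / frobSq A) * ∑ l, (res A b x0 l) ^ 2 := by
      rw [Finset.mul_sum]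
    have h3 : (mA / frobSq A) * ∑ l, (res A b x0 l) ^ 2
        ≥ (mA / frobSq A) * (lam * E0) :=
      mul_le_mul_of_nonneg_left hsum_r (by positivity)
    have h4 : (mA / frobSq A) * (lam * E0) = mA * lam / frobSq A * E0 := by ring
    linarith [h1, h2 ▸ h3]
  -- per-index bound summed over I0
  have hSge : ∑ i ∈ I0, (res A b x0 i) ^ 2 ≥ (I0.card : ℝ) * W := by
    have h1 : ∀ i ∈ I0, W ≤ (res A b x0 i) ^ 2 := by
      intro i hi
      have h2 := (hI0 i).mp hi
      linarith
    calc (I0.card : ℝ) * W = ∑ _i ∈ I0, W := by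
          rw [Finset.sum_const, nsmul_eq_mul]
      _ ≤ ∑ i ∈ I0, (res A b x0 i) ^ 2 := Finset.sum_le_sum h1
  -- combine
  have hE0nonneg : 0 ≤ E0 := Finset.sum_nonneg fun j _ => sq_nonneg _
  have hcard : (0:ℝ) ≤ (I0.card : ℝ) := Nat.cast_nonneg _
  have hDge : μ * D ≥ (I0.card : ℝ) * (mA * lam / frobSq A * E0) := by
    have := mul_le_mul_of_nonneg_left hWge hcard
    nlinarith [hSD, hSge]
  have key : (I0.card : ℝ) * (mA / μ) * (lam / frobSq A) * E0
      = (I0.card : ℝ) * (mA * lam / frobSq A * E0) / μ := by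
    field_simp
  have hDfinal : (I0.card : ℝ) * (mA / μ) * (lam / frobSq A) * E0 ≤ D := by
    rw [key, div_le_iff₀ hμ]
    linarith [hDge]
  have hE1 : ∑ j, (x1 j - xs j) ^ 2 = E0 - D := by linarith [hpyth]
  rw [hE1]
  have : (1 - (I0.card : ℝ) * (mA / μ) * (lam / frobSq A)) * E0
      = E0 - (I0.card : ℝ) * (mA / μ) * (lam / frobSq A) * E0 := by ring
  rw [this]
  linarith [hDfinal]
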